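/- Let f = 2^N χ_{[0,2^{-N}]} for a positive integer N. Then the L log^r L norm of f over [0,1] is comparable to N^r (for fixed r > 0), while the Hilbert transform Hf satisfies |Hf(x)| ∼ 1/x for 2^{-N+2} ≤ x ≤ 1/2, so that ‖Hf‖_{L^{1,q}([0,1])} ≳ N^{1/q}. Consequently, if the Hilbert transform locally maps L log^r L to L^{1,q} then r ≥ 1/q. -/

import Mathlib

open MeasureTheory Set
open scoped ENNReal NNReal

/-- Luxemburg norm of `f` on `[0,1]` for the Young function `t ↦ t log^r(2+t)`. -/
noncomputable def llogrNorm (r : ℝ) (f : ℝ → ℝ) : ℝ :=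
  sInf {t : ℝ | 0 < t ∧
    (∫⁻ x in Set.Icc (0 : ℝ) 1,
      ENNReal.ofReal (|f x| / t * (Real.log (2 + |f x| / t)) ^ r)) ≤ 1}

/-- The (principal value) Hilbert transform `Hf(x) = p.v. ∫ f(y)/(x-y) dy`. -/
noncomputable def pvHilbert (f : ℝ → ℝ) (x : ℝ) : ℝ :=
  Filter.limUnder (nhdsWithin (0 : ℝ) (Set.Ioi 0))
    (fun ε : ℝ => ∫ y in {y : ℝ | ε < |x - y|}, f y / (x - y))

/-- The Lorentz `L^{1,q}` (quasi)norm via the distribution function. -/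
noncomputable def L1qNorm (q : ℝ) (f : ℝ → ℝ) : ℝ≥0∞ :=
  (∫⁻ t in Set.Ioi (0 : ℝ),
      (ENNReal.ofReal t * volume {x : ℝ | t < |f x|}) ^ q * ENNReal.ofReal t⁻¹) ^ (1 / q)

/-- The test function `f = 2^N χ_{[0,2^{-N}]}`. -/
noncomputable def fTest (N : ℕ) : ℝ → ℝ :=
  Set.indicator (Set.Icc (0 : ℝ) ((2 : ℝ) ^ N)⁻¹) fun _ => (2 : ℝ) ^ N

lemma lint_inv (t1 t2 : ℝ) (h1 : 0 < t1) (h12 : t1 ≤ t2) :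
    ∫⁻ t in Ioo t1 t2, ENNReal.ofReal t⁻¹ = ENNReal.ofReal (Real.log (t2 / t1)) := by
  have h2 : (0:ℝ) < t2 := lt_of_lt_of_le h1 h12
  have h0 : (0:ℝ) ∉ uIcc t1 t2 := by
    rw [Set.mem_uIcc]; push_neg
    constructor <;> intro h <;> linarith
  have hii : IntervalIntegrable (fun x : ℝ => x⁻¹) volume t1 t2 := by
    apply intervalIntegral.intervalIntegrable_inv (fun x hx => ?_) (by fun_prop)
    rintro rfl; exact h0 hx
  have hio : IntegrableOn (fun x : ℝ => x⁻¹) (Ioo t1 t2) volume := by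
    have := (intervalIntegrable_iff_integrableOn_Ioo_of_le h12).mp hii
    exact this
  rw [← MeasureTheory.ofReal_integral_eq_lintegral_ofReal hio]
  · congr 1
    rw [← MeasureTheory.integral_Ioc_eq_integral_Ioo, ← intervalIntegral.integral_of_le h12]
    exact integral_inv h0
  · filter_upwards [ae_restrict_mem measurableSet_Ioo] with x hx
    exact inv_nonneg.2 (le_of_lt (h1.trans hx.1))


lemma L1q_lower (q c t1 t2 : ℝ) (hq : 1 ≤ q) (h1 : 0 < t1) (h12 : t1 ≤ t2) (g : ℝ → ℝ)
    (hset : ∀ t ∈ Ioo t1 t2, ENNReal.ofReal c ≤ ENNReal.ofReal t * volume {x | t < |g x|}) :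
    ENNReal.ofReal c * (ENNReal.ofReal (Real.log (t2 / t1))) ^ (1/q) ≤ L1qNorm q g := by
  have h0q : (0:ℝ) < q := lt_of_lt_of_le one_pos hq
  have hkey : (ENNReal.ofReal c) ^ q * ENNReal.ofReal (Real.log (t2 / t1)) ≤
      ∫⁻ t in Ioi (0:ℝ),
        (ENNReal.ofReal t * volume {x : ℝ | t < |g x|}) ^ q * ENNReal.ofReal t⁻¹ := by
    calc (ENNReal.ofReal c) ^ q * ENNReal.ofReal (Real.log (t2 / t1))
        = ∫⁻ t in Ioo t1 t2, (ENNReal.ofReal c) ^ q * ENNReal.ofReal t⁻¹ := by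
          rw [lintegral_const_mul _ (by fun_prop), lint_inv t1 t2 h1 h12]
      _ ≤ ∫⁻ t in Ioo t1 t2,
            (ENNReal.ofReal t * volume {x : ℝ | t < |g x|}) ^ q * ENNReal.ofReal t⁻¹ := by
          apply setLIntegral_mono' measurableSet_Ioo
          intro t ht
          gcongr
          exact hset t ht
      _ ≤ _ := lintegral_mono_set (fun t ht => h1.trans ht.1)
  have := ENNReal.rpow_le_rpow hkey (by positivity : (0:ℝ) ≤ 1/q)
  calc ENNReal.ofReal c * (ENNReal.ofReal (Real.log (t2 / t1))) ^ (1/q)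
      = ((ENNReal.ofReal c) ^ q * ENNReal.ofReal (Real.log (t2 / t1))) ^ (1/q) := by
        rw [ENNReal.mul_rpow_of_nonneg _ _ (by positivity : (0:ℝ) ≤ 1/q), ← ENNReal.rpow_mul,
          mul_one_div_cancel h0q.ne', ENNReal.rpow_one]
    _ ≤ _ := this


lemma pvHilbert_fTest (N : ℕ) (x : ℝ) (hx : ((2:ℝ)^N)⁻¹ < x) :
    pvHilbert (fTest N) x = 2^N * (Real.log x - Real.log (x - ((2:ℝ)^N)⁻¹)) := by
  set a : ℝ := ((2:ℝ)^N)⁻¹ with ha_def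
  have ha : 0 < a := by positivity
  have hxa : 0 < x - a := sub_pos.2 hx
  have hx0 : 0 < x := ha.trans hx
  have key : ∀ ε ∈ Ioo (0:ℝ) (x - a),
      (∫ y in {y : ℝ | ε < |x - y|}, fTest N y / (x - y))
        = 2^N * (Real.log x - Real.log (x - a)) := by
    intro ε hε
    have h1 : ∀ y : ℝ, fTest N y / (x - y)
        = (Icc (0:ℝ) a).indicator (fun y => 2^N * (x - y)⁻¹) y := by
      intro y
      by_cases hy : y ∈ Icc (0:ℝ) a
      · simp [fTest, indicator_of_mem hy, div_eq_mul_inv]; exact Or.inl hy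
      · simp [fTest, indicator_of_notMem hy]
        exact Or.inl (fun h0 => lt_of_not_ge (fun h => hy ⟨h0, h⟩))
    simp only [h1]
    rw [MeasureTheory.integral_indicator measurableSet_Icc,
      Measure.restrict_restrict measurableSet_Icc]
    have hinter : Icc (0:ℝ) a ∩ {y : ℝ | ε < |x - y|} = Icc (0:ℝ) a := by
      apply inter_eq_left.2
      intro y hy
      have : x - y ≥ x - a := by linarith [hy.2]
      have hpos : 0 < x - y := lt_of_lt_of_le hxa this
      simp only [mem_setOf_eq, abs_of_pos hpos]
      linarith [hε.2]
    rw [hinter, MeasureTheory.integral_Icc_eq_integral_Ioc,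
      ← intervalIntegral.integral_of_le ha.le,
      intervalIntegral.integral_const_mul]
    congr 1
    have := intervalIntegral.integral_comp_sub_left (fun u : ℝ => u⁻¹) x (a := 0) (b := a)
    rw [this, sub_zero, integral_inv, Real.log_div hx0.ne' hxa.ne']
    rw [Set.mem_uIcc]; push_neg
    constructor <;> intro h <;> linarith
  have hmem : Ioo (0:ℝ) (x - a) ∈ nhdsWithin (0:ℝ) (Set.Ioi 0) :=
    Ioo_mem_nhdsGT_of_mem ⟨le_refl _, hxa⟩
  have hev : (fun ε : ℝ => ∫ y in {y : ℝ | ε < |x - y|}, fTest N y / (x - y))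
      =ᶠ[nhdsWithin (0:ℝ) (Set.Ioi 0)]
      (fun _ => 2^N * (Real.log x - Real.log (x - a))) :=
    Filter.eventuallyEq_of_mem hmem key
  exact (Filter.Tendsto.congr' hev.symm tendsto_const_nhds).limUnder_eq


lemma pvHilbert_bounds (N : ℕ) (x : ℝ) (h4 : 4 / (2:ℝ)^N ≤ x) :
    1 / x ≤ pvHilbert (fTest N) x ∧ pvHilbert (fTest N) x ≤ 2 / x := by
  set a : ℝ := ((2:ℝ)^N)⁻¹ with ha_def
  have ha : 0 < a := by positivity
  have h4a : 4 * a ≤ x := by rw [ha_def]; rw [div_eq_mul_inv] at h4; linarith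
  have hx : a < x := by linarith
  have hx0 : 0 < x := ha.trans hx
  have hxa : 0 < x - a := sub_pos.2 hx
  have h2a : (2:ℝ)^N * a = 1 := by rw [ha_def]; field_simp
  rw [pvHilbert_fTest N x hx]
  constructor
  · -- lower: log x - log (x-a) ≥ a / x
    have h1 : Real.log ((x - a)/x) ≤ (x - a)/x - 1 :=
      Real.log_le_sub_one_of_pos (by positivity)
    rw [Real.log_div hxa.ne' hx0.ne'] at h1
    have h2 : a / x ≤ Real.log x - Real.log (x - a) := by
      have : (x - a)/x - 1 = -(a/x) := by field_simp; ring
      rw [this] at h1; linarith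
    calc 1 / x = (2:ℝ)^N * (a / x) := by rw [mul_div_assoc' _ a x, h2a]
      _ ≤ 2^N * (Real.log x - Real.log (x - a)) := by
          apply mul_le_mul_of_nonneg_left h2 (by positivity)
  · -- upper: log x - log (x-a) ≤ 2a/x
    have h1 : Real.log (x/(x - a)) ≤ x/(x - a) - 1 :=
      Real.log_le_sub_one_of_pos (by positivity)
    rw [Real.log_div hx0.ne' hxa.ne'] at h1
    have h3 : x / (x - a) - 1 = a / (x - a) := by field_simp; ring
    have h4' : a / (x - a) ≤ 2 * a / x := by
      rw [div_le_div_iff₀ hxa hx0]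
      nlinarith
    have h2 : Real.log x - Real.log (x - a) ≤ 2 * a / x := by
      rw [h3] at h1; linarith
    calc 2^N * (Real.log x - Real.log (x - a)) ≤ (2:ℝ)^N * (2 * a / x) := by
          apply mul_le_mul_of_nonneg_left h2 (by positivity)
      _ = 2 / x := by rw [ha_def]; field_simp

lemma pvHilbert_blowup (N : ℕ) (hN : 1 ≤ N) (x : ℝ)
    (hx : x ∈ Ioo (((2:ℝ)^N)⁻¹) (((2:ℝ)^N)⁻¹ + ((2:ℝ)^N)⁻¹/16)) :
    4 < pvHilbert (fTest N) x := by
  set a : ℝ := ((2:ℝ)^N)⁻¹ with ha_def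
  have ha : 0 < a := by positivity
  have hxa : a < x := hx.1
  have hx0 : 0 < x := ha.trans hxa
  have hxa' : 0 < x - a := sub_pos.2 hxa
  rw [pvHilbert_fTest N x hxa]
  have h16 : (16:ℝ) ≤ x / (x - a) := by
    rw [le_div_iff₀ hxa']
    nlinarith [hx.2]
  have hlog : Real.log 16 ≤ Real.log x - Real.log (x - a) := by
    rw [← Real.log_div hx0.ne' hxa'.ne']
    exact Real.log_le_log (by norm_num) h16
  have hlog16 : Real.log 16 = 4 * Real.log 2 := by
    rw [show (16:ℝ) = 2^(4:ℕ) by norm_num, Real.log_pow]; push_cast; ring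
  have h2N : (2:ℝ) ≤ 2^N := by
    calc (2:ℝ) = 2^(1:ℕ) := by norm_num
      _ ≤ 2^N := pow_le_pow_right₀ (by norm_num) hN
  have hl2 : (0.6931471803:ℝ) < Real.log 2 := Real.log_two_gt_d9
  calc (4:ℝ) < 2 * (4 * Real.log 2) := by nlinarith
    _ ≤ 2^N * (Real.log x - Real.log (x - a)) := by
        apply mul_le_mul h2N (hlog16 ▸ hlog) (by positivity)
          (by positivity)


lemma lux_integral (r : ℝ) (N : ℕ) (t : ℝ) (ht : 0 < t) :
    (∫⁻ x in Set.Icc (0 : ℝ) 1,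
      ENNReal.ofReal (|fTest N x| / t * (Real.log (2 + |fTest N x| / t)) ^ r))
    = ENNReal.ofReal (t⁻¹ * (Real.log (2 + (2:ℝ)^N / t)) ^ r) := by
  have h2N : (0:ℝ) < (2:ℝ)^N := by positivity
  have hfun : ∀ x : ℝ,
      ENNReal.ofReal (|fTest N x| / t * (Real.log (2 + |fTest N x| / t)) ^ r)
      = (Icc (0:ℝ) ((2:ℝ)^N)⁻¹).indicator
          (fun _ => ENNReal.ofReal ((2:ℝ)^N / t * (Real.log (2 + (2:ℝ)^N / t)) ^ r)) x := by
    intro x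
    by_cases hx : x ∈ Icc (0:ℝ) ((2:ℝ)^N)⁻¹
    · rw [indicator_of_mem hx]
      have : fTest N x = (2:ℝ)^N := indicator_of_mem hx _
      rw [this, abs_of_pos h2N]
    · rw [indicator_of_notMem hx]
      have : fTest N x = 0 := indicator_of_notMem hx _
      simp [this]
  simp only [hfun]
  rw [lintegral_indicator measurableSet_Icc, setLIntegral_const,
    Measure.restrict_apply measurableSet_Icc]
  have hsub : Icc (0:ℝ) ((2:ℝ)^N)⁻¹ ∩ Icc 0 1 = Icc (0:ℝ) ((2:ℝ)^N)⁻¹ := by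
    apply inter_eq_left.2
    intro y hy
    exact ⟨hy.1, hy.2.trans (by rw [inv_le_one_iff₀]; right; exact one_le_pow₀ (by norm_num))⟩
  have hv : (0:ℝ) ≤ (2:ℝ)^N / t * (Real.log (2 + (2:ℝ)^N / t)) ^ r :=
    mul_nonneg (by positivity)
      (Real.rpow_nonneg (Real.log_nonneg (by nlinarith [div_pos h2N ht] : (1:ℝ) ≤ 2 + (2:ℝ)^N / t)) r)
  rw [hsub, Real.volume_Icc, sub_zero, ← ENNReal.ofReal_mul hv]
  congr 1
  have h12 : ((2:ℝ)^N)⁻¹ * (2:ℝ)^N = 1 := inv_mul_cancel₀ (by positivity)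
  field_simp


lemma lux_mem_iff (r : ℝ) (N : ℕ) (t : ℝ) (ht : 0 < t) :
    (t ∈ {t : ℝ | 0 < t ∧
      (∫⁻ x in Set.Icc (0 : ℝ) 1,
        ENNReal.ofReal (|fTest N x| / t * (Real.log (2 + |fTest N x| / t)) ^ r)) ≤ 1})
    ↔ (Real.log (2 + (2:ℝ)^N / t)) ^ r ≤ t := by
  simp only [mem_setOf_eq, lux_integral r N t ht, ENNReal.ofReal_le_one]
  constructor
  · rintro ⟨-, h⟩
    calc (Real.log (2 + (2:ℝ)^N / t)) ^ r = t * (t⁻¹ * (Real.log (2 + (2:ℝ)^N / t)) ^ r) := by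
          field_simp
      _ ≤ t * 1 := mul_le_mul_of_nonneg_left h ht.le
      _ = t := mul_one t
  · intro h
    refine ⟨ht, ?_⟩
    calc t⁻¹ * (Real.log (2 + (2:ℝ)^N / t)) ^ r ≤ t⁻¹ * t :=
          mul_le_mul_of_nonneg_left h (by positivity)
      _ = 1 := inv_mul_cancel₀ ht.ne'

lemma lux_upper_mem (r : ℝ) (hr : 0 < r) (N : ℕ) (hN : 1 ≤ N) :
    ((2 * Real.log 2) ^ r * (N:ℝ) ^ r) ∈ {t : ℝ | 0 < t ∧
      (∫⁻ x in Set.Icc (0 : ℝ) 1,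
        ENNReal.ofReal (|fTest N x| / t * (Real.log (2 + |fTest N x| / t)) ^ r)) ≤ 1} := by
  have hl2 : (0.6931471803:ℝ) < Real.log 2 := Real.log_two_gt_d9
  have hN1 : (1:ℝ) ≤ (N:ℝ) := by exact_mod_cast hN
  set t : ℝ := (2 * Real.log 2) ^ r * (N:ℝ) ^ r with ht_def
  have ht1 : (1:ℝ) ≤ t := by
    rw [ht_def]
    calc (1:ℝ) = 1 ^ r * 1 ^ r := by rw [Real.one_rpow, mul_one]
      _ ≤ (2 * Real.log 2) ^ r * (N:ℝ) ^ r := by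
          apply mul_le_mul (Real.rpow_le_rpow (by norm_num) (by nlinarith) hr.le)
            (Real.rpow_le_rpow (by norm_num) hN1 hr.le) (by positivity) (by positivity)
  have ht : 0 < t := lt_of_lt_of_le one_pos ht1
  rw [lux_mem_iff r N t ht]
  have h2N : (2:ℝ) ≤ 2^N := by
    calc (2:ℝ) = 2^(1:ℕ) := by norm_num
      _ ≤ 2^N := pow_le_pow_right₀ (by norm_num) hN
  have hlog : Real.log (2 + (2:ℝ)^N / t) ≤ 2 * Real.log 2 * (N:ℝ) := by
    calc Real.log (2 + (2:ℝ)^N / t) ≤ Real.log ((2:ℝ)^(N+1)) := by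
          apply Real.log_le_log (by positivity)
          have hdiv : (2:ℝ)^N / t ≤ (2:ℝ)^N := by
            rw [div_le_iff₀ ht]; nlinarith [pow_pos (show (0:ℝ)<2 by norm_num) N]
          rw [pow_succ]
          nlinarith [pow_pos (show (0:ℝ)<2 by norm_num) N]
      _ = ((N:ℝ)+1) * Real.log 2 := by rw [Real.log_pow]; push_cast; ring
      _ ≤ 2 * Real.log 2 * (N:ℝ) := by nlinarith
  calc (Real.log (2 + (2:ℝ)^N / t)) ^ r ≤ (2 * Real.log 2 * (N:ℝ)) ^ r := by
        apply Real.rpow_le_rpow (Real.log_nonneg (by nlinarith [div_pos (pow_pos (show (0:ℝ)<2 by norm_num) N) ht])) hlog hr.le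
    _ = t := by rw [Real.mul_rpow (by positivity) (by positivity)]

set_option maxHeartbeats 1000000 in
lemma lux_lower_aux (r : ℝ) (hr : 0 < r) (N : ℕ) (hN : 1 ≤ N) (t : ℝ) (ht : 0 < t)
    (hle : (Real.log (2 + (2:ℝ)^N / t)) ^ r ≤ t) :
    (Real.log 2 / (2*r+2)) ^ r * (N:ℝ) ^ r ≤ t := by
  have hl2 : (0.6931471803:ℝ) < Real.log 2 := Real.log_two_gt_d9
  have hN1 : (1:ℝ) ≤ (N:ℝ) := by exact_mod_cast hN
  have hN0 : (0:ℝ) < (N:ℝ) := lt_of_lt_of_le one_pos hN1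
  obtain ⟨c, hc_def⟩ : ∃ c : ℝ, c = Real.log 2 / (2*r+2) := ⟨_, rfl⟩
  rw [← hc_def]
  have hc : 0 < c := by rw [hc_def]; positivity
  by_contra hcon
  push_neg at hcon
  have hcn : (c * (N:ℝ)) ^ r = c ^ r * (N:ℝ) ^ r := Real.mul_rpow hc.le hN0.le
  have htlt : t < (c * (N:ℝ)) ^ r := by rw [hcn]; exact hcon
  obtain ⟨u, hu_def⟩ : ∃ u : ℝ, u = t ^ r⁻¹ := ⟨_, rfl⟩
  have hu : 0 < u := hu_def ▸ Real.rpow_pos_of_pos ht _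
  have hu1 : u < c * (N:ℝ) := by
    have h := Real.rpow_lt_rpow ht.le htlt (inv_pos.2 hr)
    rw [Real.rpow_rpow_inv (by positivity) hr.ne'] at h
    rwa [hu_def]
  have hX : (0:ℝ) < (2:ℝ)^N / t := by positivity
  have hL0 : 0 ≤ Real.log (2 + (2:ℝ)^N / t) := Real.log_nonneg (by nlinarith)
  have hlogle : Real.log (2 + (2:ℝ)^N / t) ≤ u := by
    have h := Real.rpow_le_rpow (Real.rpow_nonneg hL0 r) hle (inv_pos.2 hr).le
    rw [Real.rpow_rpow_inv hL0 hr.ne'] at h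
    rwa [hu_def]
  -- now show u < log (2 + 2^N/t), contradiction
  have hfinal : u < Real.log (2 + (2:ℝ)^N / t) := by
    rcases le_or_gt u (Real.log 2 / 2) with hcase | hcase
    · calc u ≤ Real.log 2 / 2 := hcase
        _ < Real.log 2 := by nlinarith
        _ ≤ Real.log (2 + (2:ℝ)^N / t) := Real.log_le_log (by norm_num) (by nlinarith)
    · -- u > log 2 / 2 > 0
      have ht_eq : Real.log t = r * Real.log u := by
        have h5 : u ^ r = t := by rw [hu_def]; exact Real.rpow_inv_rpow ht.le hr.ne'
        rw [← h5, Real.log_rpow hu]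
      obtain ⟨a, ha_def⟩ : ∃ a : ℝ, a = 2*r / Real.log 2 := ⟨_, rfl⟩
      have ha : 0 < a := by rw [ha_def]; positivity
      have hlogu : Real.log u ≤ Real.log c + Real.log (N:ℝ) := by
        calc Real.log u ≤ Real.log (c * (N:ℝ)) := Real.log_le_log hu hu1.le
          _ = Real.log c + Real.log (N:ℝ) := Real.log_mul hc.ne' hN0.ne'
      have hlogN : Real.log (N:ℝ) ≤ (N:ℝ) / a - 1 + Real.log a := by
        have h := Real.log_le_sub_one_of_pos (show (0:ℝ) < (N:ℝ)/a by positivity)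
        rw [Real.log_div hN0.ne' ha.ne'] at h
        linarith
      have hca : Real.log c + Real.log a ≤ 0 := by
        rw [← Real.log_mul hc.ne' ha.ne']
        apply Real.log_nonpos (by positivity)
        rw [hc_def, ha_def, div_mul_div_comm, div_le_one (by positivity)]
        nlinarith
      have hNa : (N:ℝ) / a = (N:ℝ) * Real.log 2 / (2*r) := by
        rw [ha_def, div_div_eq_mul_div]
      have hrlogu : r * Real.log u ≤ Real.log 2 / 2 * (N:ℝ) - r := by
        have h1 : Real.log u ≤ Real.log c + ((N:ℝ)/a - 1 + Real.log a) := by linarith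
        have h2 : r * Real.log u ≤ r * (Real.log c + Real.log a) + r * ((N:ℝ)/a) - r := by
          nlinarith
        have h3 : r * (Real.log c + Real.log a) ≤ 0 := by nlinarith
        have h4 : r * ((N:ℝ)/a) = Real.log 2 / 2 * (N:ℝ) := by
          rw [hNa]; field_simp
        nlinarith
      have hL2 : Real.log ((2:ℝ)^N / t) ≤ Real.log (2 + (2:ℝ)^N / t) :=
        Real.log_le_log hX (by linarith)
      have hlogdiv : Real.log ((2:ℝ)^N / t) = (N:ℝ) * Real.log 2 - Real.log t := by
        rw [Real.log_div (by positivity) ht.ne', Real.log_pow]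
      have hcle : c ≤ Real.log 2 / 2 := by
        rw [hc_def]
        apply div_le_div_of_nonneg_left (by nlinarith) (by norm_num) (by nlinarith)
      calc u < c * (N:ℝ) := hu1
        _ ≤ Real.log 2 / 2 * (N:ℝ) := by nlinarith
        _ < (N:ℝ) * Real.log 2 - r * Real.log u := by nlinarith
        _ = Real.log ((2:ℝ)^N / t) := by rw [hlogdiv, ht_eq]
        _ ≤ Real.log (2 + (2:ℝ)^N / t) := hL2
  exact absurd hlogle (not_le.2 hfinal)


lemma half_rpow (q : ℝ) (hq : 1 ≤ q) (c : ℝ) (hc0 : 0 ≤ c) (hc1 : c ≤ 1) :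
    ENNReal.ofReal c ≤ (ENNReal.ofReal c) ^ (1/q) := by
  have h0q : (0:ℝ) < q := lt_of_lt_of_le one_pos hq
  have h1q : 1/q ≤ 1 := by rw [div_le_one h0q]; exact hq
  calc ENNReal.ofReal c = (ENNReal.ofReal c) ^ (1:ℝ) := (ENNReal.rpow_one _).symm
    _ ≤ (ENNReal.ofReal c) ^ (1/q) :=
      ENNReal.rpow_le_rpow_of_exponent_ge (by simpa using ENNReal.ofReal_le_ofReal hc1) h1q

lemma L1q_small (q : ℝ) (hq : 1 ≤ q) (N : ℕ) (hN : 1 ≤ N) :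
    ENNReal.ofReal (((2:ℝ)^N)⁻¹ / 16)
      ≤ L1qNorm q (Set.indicator (Set.Icc (0 : ℝ) 1) (pvHilbert (fTest N))) := by
  set a : ℝ := ((2:ℝ)^N)⁻¹ with ha_def
  have ha : 0 < a := by positivity
  have ha2 : a ≤ 1/2 := by
    rw [ha_def]
    rw [inv_le_comm₀ (by positivity) (by norm_num)]
    calc ((1:ℝ)/2)⁻¹ = 2^(1:ℕ) := by norm_num
      _ ≤ 2^N := pow_le_pow_right₀ (by norm_num) hN
  have hsub : ∀ t ∈ Ioo (2:ℝ) 4, Ioo a (a + a/16) ⊆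
      {x : ℝ | t < |Set.indicator (Set.Icc (0 : ℝ) 1) (pvHilbert (fTest N)) x|} := by
    intro t ht x hx
    have hx1 : x ∈ Icc (0:ℝ) 1 := ⟨(ha.trans hx.1).le, by nlinarith [hx.2]⟩
    have : Set.indicator (Set.Icc (0 : ℝ) 1) (pvHilbert (fTest N)) x = pvHilbert (fTest N) x :=
      indicator_of_mem hx1 _
    rw [mem_setOf_eq, this]
    calc t < 4 := ht.2
      _ < pvHilbert (fTest N) x := pvHilbert_blowup N hN x hx
      _ ≤ |pvHilbert (fTest N) x| := le_abs_self _
  have hset : ∀ t ∈ Ioo (2:ℝ) 4, ENNReal.ofReal (a/8) ≤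
      ENNReal.ofReal t * volume {x : ℝ | t < |Set.indicator (Set.Icc (0 : ℝ) 1) (pvHilbert (fTest N)) x|} := by
    intro t ht
    calc ENNReal.ofReal (a/8) = ENNReal.ofReal 2 * ENNReal.ofReal (a/16) := by
          rw [← ENNReal.ofReal_mul (by norm_num)]; congr 1; ring
      _ ≤ ENNReal.ofReal t * volume (Ioo a (a + a/16)) := by
          rw [Real.volume_Ioo]
          apply mul_le_mul' (ENNReal.ofReal_le_ofReal ht.1.le)
          apply ENNReal.ofReal_le_ofReal; linarith
      _ ≤ _ := by
          apply mul_le_mul_right (measure_mono (hsub t ht))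
  have h := L1q_lower q (a/8) 2 4 hq (by norm_num) (by norm_num) _ hset
  rw [show (4:ℝ)/2 = 2 by norm_num] at h
  refine le_trans ?_ h
  have hl2 : (0.6931471803:ℝ) < Real.log 2 := Real.log_two_gt_d9
  calc ENNReal.ofReal (a/16) = ENNReal.ofReal (a/8) * ENNReal.ofReal (1/2) := by
        rw [← ENNReal.ofReal_mul (by positivity)]; congr 1; ring
    _ ≤ ENNReal.ofReal (a/8) * (ENNReal.ofReal (1/2)) ^ (1/q) :=
        mul_le_mul_right (half_rpow q hq (1/2) (by norm_num) (by norm_num)) _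
    _ ≤ ENNReal.ofReal (a/8) * (ENNReal.ofReal (Real.log 2)) ^ (1/q) := by
        apply mul_le_mul_right
        apply ENNReal.rpow_le_rpow _ (by positivity)
        apply ENNReal.ofReal_le_ofReal; linarith

lemma L1q_large (q : ℝ) (hq : 1 ≤ q) (N : ℕ) (hN8 : 8 ≤ N) :
    ENNReal.ofReal ((N:ℝ) ^ (1/q) / 8)
      ≤ L1qNorm q (Set.indicator (Set.Icc (0 : ℝ) 1) (pvHilbert (fTest N))) := by
  have hl2 : (0.6931471803:ℝ) < Real.log 2 := Real.log_two_gt_d9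
  have h0q : (0:ℝ) < q := lt_of_lt_of_le one_pos hq
  set a : ℝ := ((2:ℝ)^N)⁻¹ with ha_def
  have ha : 0 < a := by positivity
  have h2Na : (2:ℝ)^N * a = 1 := by rw [ha_def]; field_simp
  have h2N : (256:ℝ) ≤ 2^N := by
    calc (256:ℝ) = 2^(8:ℕ) := by norm_num
      _ ≤ 2^N := pow_le_pow_right₀ (by norm_num) hN8
  have hN0 : (0:ℝ) < (N:ℝ) := by exact_mod_cast lt_of_lt_of_le (by norm_num : 0 < 8) hN8
  have h12 : (2:ℝ) ≤ 2^N/8 := by linarith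
  have hsub : ∀ t ∈ Ioo (2:ℝ) ((2:ℝ)^N/8), Ioo (4*a) t⁻¹ ⊆
      {x : ℝ | t < |Set.indicator (Set.Icc (0 : ℝ) 1) (pvHilbert (fTest N)) x|} := by
    intro t ht x hx
    have ht2 : (2:ℝ) < t := ht.1
    have htinv : t⁻¹ < 1/2 := by
      rw [inv_lt_comm₀ (by linarith) (by norm_num)]; norm_num; linarith
    have hx0 : 0 < x := lt_trans (by positivity) hx.1
    have hx1 : x ∈ Icc (0:ℝ) 1 := ⟨hx0.le, by linarith [hx.2]⟩
    have hind : Set.indicator (Set.Icc (0 : ℝ) 1) (pvHilbert (fTest N)) x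
        = pvHilbert (fTest N) x := indicator_of_mem hx1 _
    have h4x : 4 / (2:ℝ)^N ≤ x := by
      rw [div_eq_mul_inv, ← ha_def]; exact hx.1.le
    rw [mem_setOf_eq, hind]
    calc t = (t⁻¹)⁻¹ := (inv_inv t).symm
      _ < x⁻¹ := by
          apply inv_strictAnti₀ hx0 hx.2
      _ = 1/x := (one_div x).symm
      _ ≤ pvHilbert (fTest N) x := (pvHilbert_bounds N x h4x).1
      _ ≤ |pvHilbert (fTest N) x| := le_abs_self _
  have hset : ∀ t ∈ Ioo (2:ℝ) ((2:ℝ)^N/8), ENNReal.ofReal (1/2) ≤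
      ENNReal.ofReal t * volume {x : ℝ | t < |Set.indicator (Set.Icc (0 : ℝ) 1) (pvHilbert (fTest N)) x|} := by
    intro t ht
    have ht0 : (0:ℝ) < t := lt_trans (by norm_num) ht.1
    have hta : 4 * a * t ≤ 1/2 := by
      have : t ≤ 2^N/8 := ht.2.le
      calc 4 * a * t ≤ 4 * a * ((2:ℝ)^N/8) := by nlinarith
        _ = 1/2 := by rw [mul_comm (4*a)]; field_simp; nlinarith [h2Na]
    calc ENNReal.ofReal (1/2) ≤ ENNReal.ofReal (t * (t⁻¹ - 4*a)) := by
          apply ENNReal.ofReal_le_ofReal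
          rw [mul_sub, mul_inv_cancel₀ ht0.ne']
          nlinarith
      _ = ENNReal.ofReal t * ENNReal.ofReal (t⁻¹ - 4*a) := ENNReal.ofReal_mul ht0.le
      _ = ENNReal.ofReal t * volume (Ioo (4*a) t⁻¹) := by rw [Real.volume_Ioo]
      _ ≤ _ := mul_le_mul_right (measure_mono (hsub t ht)) _
  have h := L1q_lower q (1/2) 2 ((2:ℝ)^N/8) hq (by norm_num) h12 _ hset
  refine le_trans ?_ h
  have hlog : (N:ℝ)/4 ≤ Real.log ((2:ℝ)^N/8/2) := by
    have heq : (2:ℝ)^N/8/2 = (2:ℝ)^N/16 := by ring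
    rw [heq, Real.log_div (by positivity) (by norm_num), Real.log_pow]
    have h16 : Real.log 16 = 4 * Real.log 2 := by
      rw [show (16:ℝ) = 2^(4:ℕ) by norm_num, Real.log_pow]; push_cast; ring
    rw [h16]
    have hN8' : (8:ℝ) ≤ (N:ℝ) := by exact_mod_cast hN8
    nlinarith
  calc ENNReal.ofReal ((N:ℝ) ^ (1/q) / 8)
      = ENNReal.ofReal (1/2) * (ENNReal.ofReal ((N:ℝ) ^ (1/q)) * ENNReal.ofReal (1/4)) := by
        rw [← ENNReal.ofReal_mul (Real.rpow_nonneg hN0.le _), ← ENNReal.ofReal_mul (by norm_num : (0:ℝ) ≤ 1/2)]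
        congr 1; ring
    _ ≤ ENNReal.ofReal (1/2) * ((ENNReal.ofReal ((N:ℝ))) ^ (1/q) * (ENNReal.ofReal (1/4)) ^ (1/q)) := by
        apply mul_le_mul_right
        exact mul_le_mul' (le_of_eq (ENNReal.ofReal_rpow_of_pos hN0).symm)
          (half_rpow q hq (1/4) (by norm_num) (by norm_num))
    _ = ENNReal.ofReal (1/2) * (ENNReal.ofReal ((N:ℝ)/4)) ^ (1/q) := by
        rw [← ENNReal.mul_rpow_of_nonneg _ _ (by positivity : (0:ℝ) ≤ 1/q),
          ← ENNReal.ofReal_mul hN0.le]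
        congr 2; ring
    _ ≤ ENNReal.ofReal (1/2) * (ENNReal.ofReal (Real.log ((2:ℝ)^N/8/2))) ^ (1/q) := by
        apply mul_le_mul_right
        exact ENNReal.rpow_le_rpow (ENNReal.ofReal_le_ofReal hlog) (by positivity)


/-- For `f = 2^N χ_{[0,2^{-N}]}`: `‖f‖_{L log^r L[0,1]} ∼ N^r`, `|Hf(x)| ∼ 1/x` for
`2^{-N+2} ≤ x ≤ 1/2`, `‖Hf‖_{L^{1,q}([0,1])} ≳ N^{1/q}`; consequently if the Hilbert transform
locally maps `L log^r L` to `L^{1,q}` then `r ≥ 1/q`. -/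
theorem stmt_14 (r q : ℝ) (hr : 0 < r) (hq : 1 ≤ q) :
    (∃ C : ℝ, 0 < C ∧ ∀ N : ℕ, 1 ≤ N →
      (C⁻¹ * (N : ℝ) ^ r ≤ llogrNorm r (fTest N) ∧
        llogrNorm r (fTest N) ≤ C * (N : ℝ) ^ r) ∧
      (∀ x : ℝ, 4 / (2 : ℝ) ^ N ≤ x → x ≤ 1 / 2 →
        C⁻¹ / x ≤ |pvHilbert (fTest N) x| ∧ |pvHilbert (fTest N) x| ≤ C / x) ∧
      ENNReal.ofReal (C⁻¹ * (N : ℝ) ^ (1 / q)) ≤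
        L1qNorm q (Set.indicator (Set.Icc (0 : ℝ) 1) (pvHilbert (fTest N)))) ∧
    ((∃ C' : ℝ, 0 < C' ∧ ∀ f : ℝ → ℝ, Measurable f → Function.support f ⊆ Set.Icc (0 : ℝ) 1 →
        L1qNorm q (Set.indicator (Set.Icc (0 : ℝ) 1) (pvHilbert f)) ≤
          ENNReal.ofReal (C' * llogrNorm r f)) →
      1 / q ≤ r) := by
  have hl2 : (0.6931471803:ℝ) < Real.log 2 := Real.log_two_gt_d9
  have h0q : (0:ℝ) < q := lt_of_lt_of_le one_pos hq
  have h1q : 1/q ≤ 1 := by rw [div_le_one h0q]; exact hq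
  have h1q0 : 0 ≤ 1/q := by positivity
  obtain ⟨C, hC_def⟩ : ∃ C : ℝ,
      C = (2 * Real.log 2) ^ r + ((2*r+2) / Real.log 2) ^ r + 16384 := ⟨_, rfl⟩
  have hA : (0:ℝ) ≤ (2 * Real.log 2) ^ r := Real.rpow_nonneg (by nlinarith) r
  have hB : (0:ℝ) < ((2*r+2) / Real.log 2) ^ r := Real.rpow_pos_of_pos (by positivity) r
  have hC0 : 0 < C := by rw [hC_def]; nlinarith
  have hC16 : (16384:ℝ) ≤ C := by rw [hC_def]; nlinarith
  have hCinv16 : C⁻¹ ≤ 1/16384 := by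
    rw [inv_le_comm₀ hC0 (by norm_num)]
    calc ((1:ℝ)/16384)⁻¹ = 16384 := by norm_num
      _ ≤ C := hC16
  have hCinv1 : C⁻¹ ≤ 1 := le_trans hCinv16 (by norm_num)
  have hClow : C⁻¹ ≤ (Real.log 2 / (2*r+2)) ^ r := by
    have hEq : (Real.log 2 / (2*r+2)) ^ r = (((2*r+2) / Real.log 2) ^ r)⁻¹ := by
      rw [← Real.inv_rpow (by positivity), inv_div]
    rw [hEq]
    apply inv_anti₀ hB
    rw [hC_def]; nlinarith
  have key : ∀ N : ℕ, 1 ≤ N →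
      (C⁻¹ * (N : ℝ) ^ r ≤ llogrNorm r (fTest N) ∧
        llogrNorm r (fTest N) ≤ C * (N : ℝ) ^ r) ∧
      (∀ x : ℝ, 4 / (2 : ℝ) ^ N ≤ x → x ≤ 1 / 2 →
        C⁻¹ / x ≤ |pvHilbert (fTest N) x| ∧ |pvHilbert (fTest N) x| ≤ C / x) ∧
      ENNReal.ofReal (C⁻¹ * (N : ℝ) ^ (1 / q)) ≤
        L1qNorm q (Set.indicator (Set.Icc (0 : ℝ) 1) (pvHilbert (fTest N))) := by
    intro N hN
    have hN1 : (1:ℝ) ≤ (N:ℝ) := by exact_mod_cast hN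
    have hN0 : (0:ℝ) < (N:ℝ) := lt_of_lt_of_le one_pos hN1
    have hNr : (0:ℝ) ≤ (N:ℝ) ^ r := Real.rpow_nonneg hN0.le r
    have hSne : Set.Nonempty {t : ℝ | 0 < t ∧
        (∫⁻ x in Set.Icc (0 : ℝ) 1,
          ENNReal.ofReal (|fTest N x| / t * (Real.log (2 + |fTest N x| / t)) ^ r)) ≤ 1} :=
      ⟨_, lux_upper_mem r hr N hN⟩
    have hSbdd : BddBelow {t : ℝ | 0 < t ∧
        (∫⁻ x in Set.Icc (0 : ℝ) 1,
          ENNReal.ofReal (|fTest N x| / t * (Real.log (2 + |fTest N x| / t)) ^ r)) ≤ 1} :=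
      ⟨0, fun t ht => ht.1.le⟩
    refine ⟨⟨?_, ?_⟩, ?_, ?_⟩
    · -- Luxemburg lower bound
      calc C⁻¹ * (N:ℝ) ^ r ≤ (Real.log 2 / (2*r+2)) ^ r * (N:ℝ) ^ r :=
            mul_le_mul_of_nonneg_right hClow hNr
        _ ≤ llogrNorm r (fTest N) := by
            apply le_csInf hSne
            intro t ht
            exact lux_lower_aux r hr N hN t ht.1 ((lux_mem_iff r N t ht.1).mp ht)
    · -- Luxemburg upper bound
      calc llogrNorm r (fTest N) ≤ (2 * Real.log 2) ^ r * (N:ℝ) ^ r :=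
            csInf_le hSbdd (lux_upper_mem r hr N hN)
        _ ≤ C * (N:ℝ) ^ r := by
            apply mul_le_mul_of_nonneg_right _ hNr
            rw [hC_def]; nlinarith
    · -- Hilbert bounds
      intro x h4x hx12
      have hx0 : 0 < x := lt_of_lt_of_le (by positivity) h4x
      obtain ⟨hlo, hhi⟩ := pvHilbert_bounds N x h4x
      have habs : |pvHilbert (fTest N) x| = pvHilbert (fTest N) x :=
        abs_of_pos (lt_of_lt_of_le (by positivity) hlo)
      rw [habs]
      constructor
      · calc C⁻¹ / x ≤ 1 / x := by gcongr
          _ ≤ _ := hlo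
      · calc pvHilbert (fTest N) x ≤ 2 / x := hhi
          _ ≤ C / x := by gcongr; linarith
    · -- L1q lower bound
      rcases le_or_gt 8 N with hN8 | hN7
      · refine le_trans ?_ (L1q_large q hq N hN8)
        apply ENNReal.ofReal_le_ofReal
        have hNq : (0:ℝ) ≤ (N:ℝ) ^ (1/q) := Real.rpow_nonneg hN0.le _
        calc C⁻¹ * (N:ℝ) ^ (1/q) ≤ (1/16384) * (N:ℝ) ^ (1/q) :=
              mul_le_mul_of_nonneg_right hCinv16 hNq
          _ ≤ (N:ℝ) ^ (1/q) / 8 := by nlinarith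
      · refine le_trans ?_ (L1q_small q hq N hN)
        apply ENNReal.ofReal_le_ofReal
        have hNq : (N:ℝ) ^ (1/q) ≤ (N:ℝ) := by
          calc (N:ℝ) ^ (1/q) ≤ (N:ℝ) ^ (1:ℝ) :=
                Real.rpow_le_rpow_of_exponent_le hN1 h1q
            _ = (N:ℝ) := Real.rpow_one _
        have hN7' : (N:ℝ) ≤ 7 := by exact_mod_cast Nat.lt_succ_iff.mp hN7
        have h2N7 : (2:ℝ)^N ≤ 128 := by
          calc (2:ℝ)^N ≤ 2^(7:ℕ) := pow_le_pow_right₀ (by norm_num)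
                (by exact_mod_cast Nat.lt_succ_iff.mp hN7)
            _ = 128 := by norm_num
        have h2Npos : (0:ℝ) < 2^N := by positivity
        have hinv : (128:ℝ)⁻¹ ≤ ((2:ℝ)^N)⁻¹ := by
          apply inv_anti₀ h2Npos h2N7
        calc C⁻¹ * (N:ℝ) ^ (1/q) ≤ (1/16384) * 7 := by
              apply mul_le_mul hCinv16 (hNq.trans hN7') (Real.rpow_nonneg hN0.le _) (by norm_num)
          _ ≤ (128:ℝ)⁻¹ / 16 := by norm_num
          _ ≤ ((2:ℝ)^N)⁻¹ / 16 := by gcongr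
    
  refine ⟨⟨C, hC0, key⟩, ?_⟩
  rintro ⟨C', hC'0, hop⟩
  by_contra hcon
  push_neg at hcon
  obtain ⟨δ, hδ_def⟩ : ∃ δ : ℝ, δ = 1/q - r := ⟨_, rfl⟩
  have hδ : 0 < δ := by rw [hδ_def]; linarith
  obtain ⟨K, hK_def⟩ : ∃ K : ℝ, K = C * (C' * C) := ⟨_, rfl⟩
  have hK0 : 0 < K := by rw [hK_def]; positivity
  have hbound : ∀ N : ℕ, 1 ≤ N → (N:ℝ) ^ δ ≤ K := by
    intro N hN
    have hN1 : (1:ℝ) ≤ (N:ℝ) := by exact_mod_cast hN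
    have hN0 : (0:ℝ) < (N:ℝ) := lt_of_lt_of_le one_pos hN1
    have h1 := (key N hN).2.2
    have hmeas : Measurable (fTest N) := measurable_const.indicator measurableSet_Icc
    have hsupp : Function.support (fTest N) ⊆ Set.Icc (0:ℝ) 1 := by
      refine subset_trans Set.support_indicator_subset ?_
      apply Icc_subset_Icc le_rfl
      rw [inv_le_one_iff₀]; right; exact one_le_pow₀ (by norm_num)
    have h2 := hop (fTest N) hmeas hsupp
    have h3 : llogrNorm r (fTest N) ≤ C * (N:ℝ) ^ r := ((key N hN).1).2
    have h4 : ENNReal.ofReal (C⁻¹ * (N:ℝ) ^ (1/q)) ≤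
        ENNReal.ofReal (C' * (C * (N:ℝ) ^ r)) := by
      refine le_trans h1 (le_trans h2 (ENNReal.ofReal_le_ofReal ?_))
      exact mul_le_mul_of_nonneg_left h3 hC'0.le
    have h5 : C⁻¹ * (N:ℝ) ^ (1/q) ≤ C' * (C * (N:ℝ) ^ r) := by
      rw [ENNReal.ofReal_le_ofReal_iff (by positivity)] at h4
      exact h4
    have h6 : (N:ℝ) ^ (1/q) ≤ K * (N:ℝ) ^ r := by
      have := mul_le_mul_of_nonneg_left h5 hC0.le
      rw [← mul_assoc, mul_inv_cancel₀ hC0.ne', one_mul] at this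
      calc (N:ℝ) ^ (1/q) ≤ C * (C' * (C * (N:ℝ) ^ r)) := this
        _ = K * (N:ℝ) ^ r := by rw [hK_def]; ring
    have h7 : (N:ℝ) ^ (1/q) = (N:ℝ) ^ r * (N:ℝ) ^ δ := by
      rw [← Real.rpow_add hN0, hδ_def]; ring_nf
    have h8 : (N:ℝ) ^ r * (N:ℝ) ^ δ ≤ K * (N:ℝ) ^ r := by rw [← h7]; exact h6
    have hNrpos : (0:ℝ) < (N:ℝ) ^ r := Real.rpow_pos_of_pos hN0 r
    nlinarith [Real.rpow_pos_of_pos hN0 δ]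
  obtain ⟨M, hM_def⟩ : ∃ M : ℕ, M = ⌈(K+1) ^ δ⁻¹⌉₊ + 1 := ⟨_, rfl⟩
  have hM1 : 1 ≤ M := by rw [hM_def]; omega
  have hMge : (K+1) ^ δ⁻¹ ≤ (M:ℝ) := by
    rw [hM_def]
    push_cast
    calc (K+1) ^ δ⁻¹ ≤ (⌈(K+1) ^ δ⁻¹⌉₊ : ℝ) := Nat.le_ceil _
      _ ≤ (⌈(K+1) ^ δ⁻¹⌉₊ : ℝ) + 1 := by linarith
  have hcontr : K + 1 ≤ K := by
    calc K + 1 = ((K+1) ^ δ⁻¹) ^ δ := (Real.rpow_inv_rpow (by linarith) hδ.ne').symm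
      _ ≤ (M:ℝ) ^ δ := Real.rpow_le_rpow (Real.rpow_nonneg (by linarith) _) hMge hδ.le
      _ ≤ K := hbound M hM1
  linarith
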